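/- Let C_pres ∈ ℝ^{n×m} admit a thin singular value decomposition C_pres = U1 Σ Vᵀ with U1 ∈ ℝ^{n×r}, V ∈ ℝ^{m×r} having orthonormal columns and Σ = diag(σ_1 ≥ ⋯ ≥ σ_r > 0). Fix k with 0 ≤ k < r, let U_k ∈ ℝ^{n×k} be the first k columns of U1, and let U_{2,k} ∈ ℝ^{n×(n−k)} satisfy U_{2,k}ᵀ U_{2,k} = I_{n−k} and U_k U_kᵀ + U_{2,k} U_{2,k}ᵀ = I_n. Let W0 ∈ ℝ^{p×n}, Z ∈ ℝ^{p×(n−k)}, and set W' = W0 + Z U_{2,k}ᵀ. Then for every column p_i of C_pres, ‖(W' − W0) p_i‖₂ ≤ ‖Z‖₂ · σ_{k+1}, where ‖Z‖₂ is the spectral norm of Z. Moreover W' u = W0 u for every u in the column space of U_k, so the top-k principal directions of the preserved subspace are preserved exactly. -/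

import Mathlib

open Matrix

/-- Euclidean (ℓ²) norm of a real vector. -/
noncomputable def euclidNorm {n : ℕ} (v : Fin n → ℝ) : ℝ :=
  ‖(WithLp.equiv 2 (Fin n → ℝ)).symm v‖

/-- Spectral (ℓ²→ℓ²) operator norm of a real matrix. -/
noncomputable def specNorm {m n : ℕ} (A : Matrix (Fin m) (Fin n) ℝ) : ℝ :=
  ‖LinearMap.toContinuousLinearMap (Matrix.toEuclideanLin A)‖

lemma enorm_nonneg' {n : ℕ} (v : Fin n → ℝ) : 0 ≤ euclidNorm v := norm_nonneg _

lemma enorm_mulVec_le {m n : ℕ} (A : Matrix (Fin m) (Fin n) ℝ) (v : Fin n → ℝ) :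
    euclidNorm (A.mulVec v) ≤ specNorm A * euclidNorm v := by
  have h := (LinearMap.toContinuousLinearMap (Matrix.toEuclideanLin A)).le_opNorm
    ((WithLp.equiv 2 (Fin n → ℝ)).symm v)
  simpa [euclidNorm, specNorm, Matrix.toEuclideanLin_apply_piLp_toLp] using h

lemma enorm_sq {n : ℕ} (v : Fin n → ℝ) : euclidNorm v ^ 2 = ∑ i, v i ^ 2 := by
  have : euclidNorm v = Real.sqrt (∑ i, v i ^ 2) := by
    simpa [euclidNorm] using EuclideanSpace.norm_eq ((WithLp.equiv 2 (Fin n → ℝ)).symm v)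
  rw [this, Real.sq_sqrt]
  positivity

set_option maxHeartbeats 1000000 in
/-- **Preservation Bound for Truncated Cases.**
Let `C_pres = U1 Σ Vᵀ` be a thin SVD with decreasing positive singular values,
`U_k` the first `k` columns of `U1` (`k < r`), `U_{2,k}` an orthonormal basis
of the orthogonal complement of `span(U_k)`, and `W' = W0 + Z U_{2,k}ᵀ`.
Then every column `p_i` of `C_pres` satisfies
`‖(W' − W0) p_i‖₂ ≤ ‖Z‖₂ σ_{k+1}`, and `W'` agrees with `W0` on the
column space of `U_k` (exact preservation of the top-`k` directions). -/
theorem truncated_preservation_bound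
    {n m r p : ℕ}
    (Cpres : Matrix (Fin n) (Fin m) ℝ)
    (U1 : Matrix (Fin n) (Fin r) ℝ)
    (V : Matrix (Fin m) (Fin r) ℝ)
    (σ : Fin r → ℝ)
    (hU1 : U1ᵀ * U1 = 1)
    (hV : Vᵀ * V = 1)
    (hσpos : ∀ i, 0 < σ i)
    (hσdec : ∀ i j : Fin r, i ≤ j → σ j ≤ σ i)
    (hSVD : Cpres = U1 * Matrix.diagonal σ * Vᵀ)
    (k : ℕ) (hk : k < r)
    (Uk : Matrix (Fin n) (Fin k) ℝ)
    (hUk : Uk = U1.submatrix id (Fin.castLE hk.le))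
    (U2k : Matrix (Fin n) (Fin (n - k)) ℝ)
    (hU2k : U2kᵀ * U2k = 1)
    (hbasis : Uk * Ukᵀ + U2k * U2kᵀ = 1)
    (W0 : Matrix (Fin p) (Fin n) ℝ)
    (Z : Matrix (Fin p) (Fin (n - k)) ℝ)
    (W' : Matrix (Fin p) (Fin n) ℝ)
    (hW' : W' = W0 + Z * U2kᵀ) :
    (∀ i : Fin m,
      euclidNorm ((W' - W0).mulVec (fun a => Cpres a i)) ≤ specNorm Z * σ ⟨k, hk⟩) ∧
    (∀ y : Fin k → ℝ, W'.mulVec (Uk.mulVec y) = W0.mulVec (Uk.mulVec y)) := by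
  have hdiff : W' - W0 = Z * U2kᵀ := by rw [hW']; abel
  have hUkU1 : Ukᵀ * U1 = Matrix.of (fun (i : Fin k) (j : Fin r) =>
      if Fin.castLE hk.le i = j then (1:ℝ) else 0) := by
    ext i j
    have h := congrFun (congrFun hU1 (Fin.castLE hk.le i)) j
    simp only [Matrix.mul_apply, Matrix.one_apply, Matrix.transpose_apply] at h
    simpa [hUk, Matrix.mul_apply] using h
  have hUkUk : Ukᵀ * Uk = 1 := by
    ext i j
    have h := congrFun (congrFun hU1 (Fin.castLE hk.le i)) (Fin.castLE hk.le j)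
    simp only [Matrix.mul_apply, Matrix.one_apply, Matrix.transpose_apply] at h
    simp only [Matrix.mul_apply, Matrix.one_apply, hUk, Matrix.submatrix_apply,
      Matrix.transpose_apply, id]
    rw [h]
    simp [Fin.castLE_inj]
  have hmul0 : U2k * (U2kᵀ * Uk) = 0 := by
    have h1 : (Uk * Ukᵀ + U2k * U2kᵀ) * Uk = Uk := by rw [hbasis, Matrix.one_mul]
    have h2 : Uk * (Ukᵀ * Uk) + U2k * (U2kᵀ * Uk) = Uk := by
      rw [← Matrix.mul_assoc, ← Matrix.mul_assoc, ← Matrix.add_mul]; exact h1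
    rw [hUkUk, Matrix.mul_one] at h2
    linear_combination (norm := abel) h2
  have hU2kUk : U2kᵀ * Uk = 0 := by
    have h := congrArg (fun M => U2kᵀ * M) hmul0
    simpa [← Matrix.mul_assoc, hU2k] using h
  refine ⟨?_, ?_⟩
  · intro i
    set y : Fin r → ℝ := fun j => σ j * V i j with hy
    have hcol : (fun a => Cpres a i) = U1.mulVec y := by
      funext a
      rw [hSVD]
      calc (U1 * Matrix.diagonal σ * Vᵀ) a i
          = ∑ j, (U1 * Matrix.diagonal σ) a j * V i j := by
            simp [Matrix.mul_apply]
        _ = ∑ j, U1 a j * (σ j * V i j) := by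
            apply Finset.sum_congr rfl
            intro j _
            rw [Matrix.mul_diagonal]
            ring
        _ = U1.mulVec y a := by
            simp [Matrix.mulVec, dotProduct, hy]
    set B : Matrix (Fin (n-k)) (Fin r) ℝ := U2kᵀ * U1 with hB
    have hBB : Bᵀ * B = Matrix.of (fun (j j' : Fin r) =>
        if j = j' ∧ ¬ ((j:ℕ) < k) then (1:ℝ) else 0) := by
      have e1 : Bᵀ * B = U1ᵀ * (U2k * U2kᵀ) * U1 := by
        simp only [hB, Matrix.transpose_mul, Matrix.transpose_transpose, Matrix.mul_assoc]
      have hsub : U2k * U2kᵀ = 1 - Uk * Ukᵀ := by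
        linear_combination (norm := abel) hbasis
      have e2 : U1ᵀ * (1 - Uk * Ukᵀ) * U1 = U1ᵀ * U1 - (Ukᵀ * U1)ᵀ * (Ukᵀ * U1) := by
        simp only [Matrix.mul_sub, Matrix.sub_mul, Matrix.mul_one, Matrix.one_mul,
          Matrix.transpose_mul, Matrix.transpose_transpose, Matrix.mul_assoc]
      rw [e1, hsub, e2, hU1, hUkU1]
      ext j j'
      simp only [Matrix.sub_apply, Matrix.mul_apply, Matrix.one_apply,
        Matrix.transpose_apply, Matrix.of_apply]
      by_cases hjj : j = j'
      · subst hjj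
        by_cases hjk : (j:ℕ) < k
        · have hs : ∑ x : Fin k, (if Fin.castLE hk.le x = j then (1:ℝ) else 0) *
              (if Fin.castLE hk.le x = j then (1:ℝ) else 0) = 1 := by
            rw [Finset.sum_eq_single ⟨(j:ℕ), hjk⟩]
            · simp [Fin.ext_iff]
            · intro b _ hb
              have hb' : ¬ Fin.castLE hk.le b = j := by
                intro hcontra
                apply hb
                apply Fin.ext
                simpa using congrArg Fin.val hcontra
              simp [hb']
            · simp
          rw [hs]; simp [hjk]
        · have hs : ∑ x : Fin k, (if Fin.castLE hk.le x = j then (1:ℝ) else 0) *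
              (if Fin.castLE hk.le x = j then (1:ℝ) else 0) = 0 := by
            apply Finset.sum_eq_zero
            intro b _
            have hbk := b.isLt
            have hb' : ¬ Fin.castLE hk.le b = j := by
              simp only [Fin.ext_iff, Fin.coe_castLE]
              omega
            simp [hb']
          rw [hs]; simp [hjk]
      · have hs : ∑ x : Fin k, (if Fin.castLE hk.le x = j then (1:ℝ) else 0) *
            (if Fin.castLE hk.le x = j' then (1:ℝ) else 0) = 0 := by
          apply Finset.sum_eq_zero
          intro b _
          by_cases h1 : Fin.castLE hk.le b = j
          · have h2 : ¬ Fin.castLE hk.le b = j' := by rw [h1]; exact hjj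
            simp [h2]
          · simp [h1]
        rw [hs]; simp [hjj]
    have hVrow : ∑ j, V i j ^ 2 ≤ 1 := by
      set P : Matrix (Fin m) (Fin m) ℝ := V * Vᵀ with hP
      have hPP : P * P = P := by
        rw [hP, Matrix.mul_assoc, ← Matrix.mul_assoc Vᵀ, hV, Matrix.one_mul]
      have hdiag : P i i = ∑ j, V i j ^ 2 := by
        simp [hP, Matrix.mul_apply, sq]
      have hPsq : P i i = ∑ l, P i l ^ 2 := by
        have h := congrFun (congrFun hPP i) i
        rw [Matrix.mul_apply] at h
        have hsym : ∀ l, P l i = P i l := by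
          intro l; simp [hP, Matrix.mul_apply, mul_comm]
        calc P i i = ∑ l, P i l * P l i := h.symm
          _ = ∑ l, P i l ^ 2 := by
              apply Finset.sum_congr rfl; intro l _; rw [hsym l, sq]
      have h0 : 0 ≤ P i i := by rw [hdiag]; positivity
      have hle : P i i ^ 2 ≤ P i i := by
        calc P i i ^ 2 ≤ ∑ l, P i l ^ 2 :=
              Finset.single_le_sum (fun l _ => sq_nonneg (P i l)) (Finset.mem_univ i)
          _ = P i i := hPsq.symm
      nlinarith [hdiag]
    have hσk : 0 ≤ σ ⟨k, hk⟩ := (hσpos _).le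
    have hBy : euclidNorm (B.mulVec y) ^ 2 ≤ σ ⟨k, hk⟩ ^ 2 := by
      rw [enorm_sq]
      have hexp : ∑ a, (B.mulVec y) a ^ 2
          = ∑ j : Fin r, (if ¬ ((j:ℕ) < k) then y j ^ 2 else 0) := by
        have e1 : ∑ a, (B.mulVec y) a ^ 2 = (B.mulVec y) ⬝ᵥ (B.mulVec y) := by
          simp [dotProduct, sq]
        have e2 : (B.mulVec y) ⬝ᵥ (B.mulVec y) = ((Bᵀ * B).mulVec y) ⬝ᵥ y := by
          rw [dotProduct_mulVec, ← Matrix.mulVec_transpose, Matrix.mulVec_mulVec]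
        rw [e1, e2, hBB]
        simp only [dotProduct, Matrix.mulVec, Matrix.of_apply]
        apply Finset.sum_congr rfl
        intro j _
        have hrow : (∑ j' : Fin r, (if j = j' ∧ ¬ ((j:ℕ) < k) then (1:ℝ) else 0) * y j')
            = if ¬ ((j:ℕ) < k) then y j else 0 := by
          rw [Finset.sum_eq_single j]
          · by_cases hjk : (j:ℕ) < k <;> simp [hjk]
          · intro b _ hb
            simp [Ne.symm hb]
          · simp
        rw [hrow]
        by_cases hjk : (j:ℕ) < k <;> simp [hjk, sq]
      rw [hexp]
      calc ∑ j : Fin r, (if ¬ ((j:ℕ) < k) then y j ^ 2 else 0)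
          ≤ ∑ j : Fin r, σ ⟨k, hk⟩ ^ 2 * V i j ^ 2 := by
            apply Finset.sum_le_sum
            intro j _
            by_cases hjk : (j:ℕ) < k
            · simp only [hjk, not_true, if_false]
              positivity
            · simp only [hjk, not_false_iff, if_true, hy]
              have hkj : (⟨k, hk⟩ : Fin r) ≤ j := by
                simp only [Fin.le_def]
                omega
              have hσj : σ j ≤ σ ⟨k, hk⟩ := hσdec _ _ hkj
              have hσj0 : 0 ≤ σ j := (hσpos j).le
              rw [mul_pow]
              exact mul_le_mul_of_nonneg_right (pow_le_pow_left₀ hσj0 hσj 2) (sq_nonneg _)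
        _ = σ ⟨k, hk⟩ ^ 2 * ∑ j, V i j ^ 2 := by rw [Finset.mul_sum]
        _ ≤ σ ⟨k, hk⟩ ^ 2 * 1 := mul_le_mul_of_nonneg_left hVrow (sq_nonneg _)
        _ = σ ⟨k, hk⟩ ^ 2 := mul_one _
    have hBy' : euclidNorm (B.mulVec y) ≤ σ ⟨k, hk⟩ := by
      have h := Real.sqrt_le_sqrt hBy
      rwa [Real.sqrt_sq (enorm_nonneg' _), Real.sqrt_sq hσk] at h
    rw [hdiff, hcol]
    have hrw : (Z * U2kᵀ).mulVec (U1.mulVec y) = Z.mulVec (B.mulVec y) := by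
      rw [hB, Matrix.mulVec_mulVec, Matrix.mulVec_mulVec, Matrix.mul_assoc]
    rw [hrw]
    calc euclidNorm (Z.mulVec (B.mulVec y)) ≤ specNorm Z * euclidNorm (B.mulVec y) :=
          enorm_mulVec_le Z _
      _ ≤ specNorm Z * σ ⟨k, hk⟩ := mul_le_mul_of_nonneg_left hBy' (norm_nonneg _)
  · intro y
    rw [hW', Matrix.add_mulVec]
    have h0 : (Z * U2kᵀ).mulVec (Uk.mulVec y) = 0 := by
      rw [Matrix.mulVec_mulVec, Matrix.mul_assoc, hU2kUk, Matrix.mul_zero]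
      simp
    rw [h0, add_zero]
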